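/- Let n and d be elements of Q(√(Q^+)) with d ≠ 0, and suppose d = d_0 + √p·d_1 where p is a prime, d_0, d_1 ∈ Q(√(Q^+)), and d_0, d_1 lie in the subfield generated by square roots of rationals whose numerator and denominator are coprime to p. Then d_0² − p·d_1² ≠ 0 and n/d = n(d_0 − √p·d_1)/(d_0² − p·d_1²). -/

import Mathlib

open IntermediateField

private lemma valRat_zero {p : ℕ} (hp : p.Prime) {q : ℚ} (hnum : ¬ (p : ℤ) ∣ q.num)
    (hden : ¬ p ∣ q.den) : padicValRat p q = 0 := by
  unfold padicValRat
  rw [padicValInt.eq_zero_of_not_dvd hnum, padicValNat.eq_zero_of_not_dvd hden]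
  simp

private lemma quad_rep (K : IntermediateField ℚ ℝ) (s : ℝ) (hs : s * s ∈ K) (hsK : s ∉ K)
    {x : ℝ} (hx : x ∈ IntermediateField.adjoin ℚ (insert s (K : Set ℝ))) :
    ∃ u ∈ K, ∃ v ∈ K, x = u + v * s := by
  let E : IntermediateField ℚ ℝ :=
  { carrier := {x | ∃ u ∈ K, ∃ v ∈ K, x = u + v * s}
    add_mem' := by
      rintro a b ⟨u, hu, v, hv, rfl⟩ ⟨u', hu', v', hv', rfl⟩
      exact ⟨u + u', add_mem hu hu', v + v', add_mem hv hv', by ring⟩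
    mul_mem' := by
      rintro a b ⟨u, hu, v, hv, rfl⟩ ⟨u', hu', v', hv', rfl⟩
      exact ⟨u * u' + v * v' * (s * s), add_mem (mul_mem hu hu') (mul_mem (mul_mem hv hv') hs),
        u * v' + v * u', add_mem (mul_mem hu hv') (mul_mem hv hu'), by ring⟩
    one_mem' := ⟨1, one_mem K, 0, zero_mem K, by ring⟩
    zero_mem' := ⟨0, zero_mem K, 0, zero_mem K, by ring⟩
    algebraMap_mem' := fun q => ⟨algebraMap ℚ ℝ q, K.algebraMap_mem q, 0, zero_mem K, by ring⟩
    inv_mem' := by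
      rintro x ⟨u, hu, v, hv, rfl⟩
      by_cases hx0 : u + v * s = 0
      · rw [hx0]
        exact ⟨0, zero_mem K, 0, zero_mem K, by simp⟩
      · set N : ℝ := u ^ 2 - (s * s) * v ^ 2 with hNdef
        have hNmem : N ∈ K := sub_mem (pow_mem hu 2) (mul_mem hs (pow_mem hv 2))
        have hN : N ≠ 0 := by
          intro h0
          by_cases hv0 : v = 0
          · have hu2 : u ^ 2 = 0 := by rw [hNdef, hv0] at h0; simpa using h0
            have : u = 0 := pow_eq_zero_iff (n := 2) (by norm_num) |>.mp hu2
            exact hx0 (by rw [this, hv0]; ring)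
          · have hfac : (u - s * v) * (u + s * v) = 0 := by
              have : u ^ 2 = (s * s) * v ^ 2 := by rw [hNdef] at h0; linarith
              nlinarith [this]
            rcases mul_eq_zero.mp hfac with h | h
            · exact hsK (by
                have : s = u / v := by field_simp; linarith
                rw [this]; exact div_mem hu hv)
            · exact hsK (by
                have : s = -(u / v) := by field_simp; linarith
                rw [this]; exact neg_mem (div_mem hu hv))
        refine ⟨u / N, div_mem hu hNmem, -(v / N), neg_mem (div_mem hv hNmem), ?_⟩
        have key : (u + v * s) * (u / N + -(v / N) * s) = 1 := by
          field_simp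
          ring
        exact inv_eq_of_mul_eq_one_right key }
  have hle : IntermediateField.adjoin ℚ (insert s (K : Set ℝ)) ≤ E := by
    rw [IntermediateField.adjoin_le_iff]
    rintro y (rfl | hy)
    · exact ⟨0, zero_mem K, 1, one_mem K, by ring⟩
    · exact ⟨y, hy, 0, zero_mem K, by ring⟩
  exact hle hx

private lemma even_val (p : ℕ) (hp : p.Prime) (T : Finset ℝ)
    (hT : ∀ y ∈ T, ∃ q : ℚ, 0 < q ∧ padicValRat p q = 0 ∧ y * y = (q : ℝ)) :
    ∀ x ∈ IntermediateField.adjoin ℚ (T : Set ℝ), ∀ q : ℚ, q ≠ 0 → x ^ 2 = (q : ℝ) →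
      Even (padicValRat p q) := by
  classical
  haveI : Fact p.Prime := ⟨hp⟩
  induction T using Finset.induction with
  | empty =>
    intro x hx q hq hxq
    rw [Finset.coe_empty, IntermediateField.adjoin_empty, IntermediateField.mem_bot] at hx
    obtain ⟨r, rfl⟩ := hx
    have hr2 : (r : ℚ) ^ 2 = q := by
      have : ((r : ℝ)) ^ 2 = (q : ℝ) := by
        rw [show ((algebraMap ℚ ℝ) r : ℝ) = (r : ℝ) from eq_ratCast _ r] at hxq
        exact hxq
      exact_mod_cast this
    have hr0 : (r : ℚ) ≠ 0 := by
      intro h; rw [h] at hr2; simp at hr2; exact hq hr2.symm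
    rw [← hr2, padicValRat.pow r]
    exact ⟨padicValRat p r, by ring⟩
  | @insert y T hyT ih =>
    intro x hx q hq hxq
    obtain ⟨a, ha_pos, ha_val, hyy⟩ := hT y (Finset.mem_insert_self y T)
    have hT' : ∀ z ∈ T, ∃ q : ℚ, 0 < q ∧ padicValRat p q = 0 ∧ z * z = (q : ℝ) :=
      fun z hz => hT z (Finset.mem_insert_of_mem hz)
    set K := IntermediateField.adjoin ℚ (T : Set ℝ) with hK
    by_cases hsK : y ∈ K
    · have hle : IntermediateField.adjoin ℚ ((insert y T : Finset ℝ) : Set ℝ) ≤ K := by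
        rw [IntermediateField.adjoin_le_iff, Finset.coe_insert]
        exact Set.insert_subset hsK (IntermediateField.subset_adjoin ℚ _)
      exact ih hT' x (hle hx) q hq hxq
    · have haK : y * y ∈ K := by
        rw [hyy, show ((a : ℝ)) = algebraMap ℚ ℝ a from (eq_ratCast _ a).symm]
        exact K.algebraMap_mem a
      have hx' : x ∈ IntermediateField.adjoin ℚ (insert y (K : Set ℝ)) := by
        have hle : IntermediateField.adjoin ℚ ((insert y T : Finset ℝ) : Set ℝ) ≤
            IntermediateField.adjoin ℚ (insert y (K : Set ℝ)) := by
          rw [IntermediateField.adjoin_le_iff, Finset.coe_insert]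
          apply Set.insert_subset
          · exact IntermediateField.subset_adjoin ℚ _ (Set.mem_insert y _)
          · intro t ht
            exact IntermediateField.subset_adjoin ℚ _
              (Set.mem_insert_of_mem y (IntermediateField.subset_adjoin ℚ _ ht))
        exact hle hx
      obtain ⟨u, hu, v, hv, rfl⟩ := quad_rep K y haK hsK hx'
      have h1 : (q : ℝ) = u ^ 2 + v ^ 2 * (a : ℝ) + 2 * u * v * y := by
        calc (q : ℝ) = (u + v * y) ^ 2 := hxq.symm
        _ = u ^ 2 + v ^ 2 * (y * y) + 2 * u * v * y := by ring
        _ = u ^ 2 + v ^ 2 * (a : ℝ) + 2 * u * v * y := by rw [hyy]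
      have huv : u = 0 ∨ v = 0 := by
        by_contra hcon
        push_neg at hcon
        obtain ⟨hu0, hv0⟩ := hcon
        apply hsK
        have hy_eq : y = ((q : ℝ) - u ^ 2 - v ^ 2 * (a : ℝ)) / (2 * u * v) := by
          field_simp
          linarith
        rw [hy_eq]
        have hqK : ((q : ℝ)) ∈ K := by
          rw [show ((q : ℝ)) = algebraMap ℚ ℝ q from (eq_ratCast _ q).symm]
          exact K.algebraMap_mem q
        have haK' : ((a : ℝ)) ∈ K := by
          rw [show ((a : ℝ)) = algebraMap ℚ ℝ a from (eq_ratCast _ a).symm]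
          exact K.algebraMap_mem a
        exact div_mem (sub_mem (sub_mem hqK (pow_mem hu 2)) (mul_mem (pow_mem hv 2) haK'))
          (mul_mem (mul_mem (by
            rw [show (2 : ℝ) = algebraMap ℚ ℝ 2 from by norm_num]
            exact K.algebraMap_mem 2) hu) hv)
      rcases huv with hu0 | hv0
      · -- x = v * y, x^2 = a * v^2 = q
        have hv2 : v ^ 2 = (((q / a) : ℚ) : ℝ) := by
          push_cast
          rw [eq_div_iff (show (a : ℝ) ≠ 0 by exact_mod_cast ha_pos.ne')]
          rw [hu0] at h1
          linarith
        have hqa0 : q / a ≠ 0 := div_ne_zero hq ha_pos.ne'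
        have := ih hT' v hv (q / a) hqa0 hv2
        have hval : padicValRat p (q / a) = padicValRat p q - padicValRat p a :=
          padicValRat.div hq ha_pos.ne'
        rw [hval, ha_val, sub_zero] at this
        exact this
      · rw [hv0] at h1
        have hu2 : u ^ 2 = (q : ℝ) := by rw [h1]; ring
        exact ih hT' u hu q hq hu2

private lemma sqrtp_not_mem (p : ℕ) (hp : p.Prime) :
    Real.sqrt p ∉ IntermediateField.adjoin ℚ
      {y : ℝ | ∃ q : ℚ, 0 < q ∧ ¬ (p : ℤ) ∣ q.num ∧ ¬ p ∣ q.den ∧ y = Real.sqrt q} := by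
  intro h
  obtain ⟨T, hTsub, hmem⟩ := IntermediateField.exists_finset_of_mem_adjoin h
  have hT : ∀ y ∈ T, ∃ q : ℚ, 0 < q ∧ padicValRat p q = 0 ∧ y * y = (q : ℝ) := by
    intro y hy
    obtain ⟨q, hq, hnum, hden, rfl⟩ := hTsub hy
    exact ⟨q, hq, valRat_zero hp hnum hden,
      Real.mul_self_sqrt (by exact_mod_cast hq.le)⟩
  have hsq : (Real.sqrt p) ^ 2 = (((p : ℚ)) : ℝ) := by
    rw [Real.sq_sqrt (by positivity : (0:ℝ) ≤ (p : ℝ))]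
    push_cast
    ring
  have heven := even_val p hp T hT _ hmem (p : ℚ)
    (by exact_mod_cast hp.ne_zero) hsq
  rw [padicValRat.self hp.one_lt] at heven
  exact (Int.not_odd_iff_even.mpr heven) odd_one

/-- Division algorithm in ℚ(√ℚ⁺): if d = d₀ + √p·d₁ with d₀, d₁ in the subfield
generated by square roots of positive rationals whose numerator and denominator
are coprime to the prime p, and d ≠ 0, then d₀² − p·d₁² ≠ 0 and
n/d = n(d₀ − √p·d₁)/(d₀² − p·d₁²). -/
theorem stmt9 (p : ℕ) (hp : p.Prime) (n d d0 d1 : ℝ)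
    (hn : n ∈ IntermediateField.adjoin ℚ {y : ℝ | ∃ q : ℚ, 0 < q ∧ y = Real.sqrt q})
    (hd0 : d0 ∈ IntermediateField.adjoin ℚ
      {y : ℝ | ∃ q : ℚ, 0 < q ∧ ¬ (p : ℤ) ∣ q.num ∧ ¬ p ∣ q.den ∧ y = Real.sqrt q})
    (hd1 : d1 ∈ IntermediateField.adjoin ℚ
      {y : ℝ | ∃ q : ℚ, 0 < q ∧ ¬ (p : ℤ) ∣ q.num ∧ ¬ p ∣ q.den ∧ y = Real.sqrt q})
    (hd : d = d0 + Real.sqrt p * d1) (hdne : d ≠ 0) :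
    d0 ^ 2 - (p : ℝ) * d1 ^ 2 ≠ 0 ∧
      n / d = n * (d0 - Real.sqrt p * d1) / (d0 ^ 2 - (p : ℝ) * d1 ^ 2) := by
  have hs : Real.sqrt p * Real.sqrt p = (p : ℝ) :=
    Real.mul_self_sqrt (by positivity)
  have hfact : d * (d0 - Real.sqrt p * d1) = d0 ^ 2 - (p : ℝ) * d1 ^ 2 := by
    rw [hd]
    linear_combination (-(d1 ^ 2)) * hs
  have hN : d0 ^ 2 - (p : ℝ) * d1 ^ 2 ≠ 0 := by
    intro h0
    rw [h0] at hfact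
    have hz : d0 - Real.sqrt p * d1 = 0 := by
      rcases mul_eq_zero.mp hfact with h | h
      · exact absurd h hdne
      · exact h
    by_cases hd1z : d1 = 0
    · apply hdne
      have h00 : d0 = 0 := by simpa [hd1z] using hz
      rw [hd, hd1z, h00]; ring
    · apply sqrtp_not_mem p hp
      have : Real.sqrt p = d0 / d1 := by
        field_simp
        linarith [hz]
      rw [this]
      exact div_mem hd0 hd1
  refine ⟨hN, ?_⟩
  have hc : d0 - Real.sqrt p * d1 ≠ 0 := by
    intro h
    rw [h, mul_zero] at hfact
    exact hN hfact.symm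
  rw [← hfact]
  field_simp
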